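/- Let G be a connected undirected graph on {1,…,L}, η > 0, and W ∈ ℝ^{L×L} a doubly stochastic matrix such that w_{ii} ≥ η for all i, w_{ij} ≥ η whenever {i,j} is an edge of G, and w_{ij} = 0 whenever i ≠ j and {i,j} is not an edge of G; set c_w := 1 − η/(4L²). Let e : ℕ → ℝ^{L×n} and suppose x̄ : ℕ → ℝ^{L×n} satisfies x̄(t) = W·x̄(t−1) + e(t) for all t > t_q. Then for every p ≥ 1, with t = t_q + p and J the all-ones L×L matrix: ‖x̄(t) − (1/L)·J·x̄(t)‖_F ≤ L·c_w^{p−1}·‖x̄(t_q)‖_F + L·Σ_{τ=1}^{p−1} c_w^{τ−1}·‖e(t−τ)‖_F + √(L−1)·‖e(t)‖_F. -/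

import Mathlib

open Matrix Finset

attribute [local instance] Matrix.frobeniusSeminormedAddCommGroup
  Matrix.frobeniusNormedAddCommGroup


private lemma list_cs (l : List ℝ) :
    l.sum ^ 2 ≤ (l.length : ℝ) * (l.map (fun x => x ^ 2)).sum := by
  induction l with
  | nil => simp
  | cons x l ih =>
    have hq : 0 ≤ (l.map (fun x => x ^ 2)).sum :=
      List.sum_nonneg (by intro y hy; simp at hy; obtain ⟨z, _, rfl⟩ := hy; positivity)
    have hn : (0:ℝ) ≤ (l.length : ℝ) := by positivity
    simp only [List.sum_cons, List.length_cons, List.map_cons]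
    push_cast
    by_cases hl0 : l.length = 0
    · rw [List.length_eq_zero_iff] at hl0
      subst hl0
      simp
    · have hn1 : (1:ℝ) ≤ (l.length : ℝ) := by
        have : 1 ≤ l.length := Nat.one_le_iff_ne_zero.2 hl0
        exact_mod_cast this
      have hA : 0 ≤ (l.length : ℝ) * (List.map (fun x => x ^ 2) l).sum - l.sum ^ 2 := by
        linarith
      have hnA : 0 ≤ (l.length : ℝ) *
          ((l.length : ℝ) * (List.map (fun x => x ^ 2) l).sum - l.sum ^ 2) :=
        mul_nonneg hn hA
      nlinarith [sq_nonneg ((l.length : ℝ) * x - l.sum), hA, hnA, hq, hn1]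

private lemma walk_tele {V : Type*} {G : SimpleGraph V} (v : V → ℝ) :
    ∀ {a b : V} (p : G.Walk a b),
      (p.darts.map (fun d => v d.fst - v d.snd)).sum = v a - v b := by
  intro a b p
  induction p with
  | nil => simp
  | cons h q ih => simp [ih]

private lemma key_vec (L : ℕ) (G : SimpleGraph (Fin L)) (hG : G.Connected)
    (η : ℝ) (hη : 0 < η) (W : Matrix (Fin L) (Fin L) ℝ)
    (hW_nonneg : ∀ i j, 0 ≤ W i j)
    (hW_row : ∀ i, ∑ j, W i j = 1)
    (hW_col : ∀ j, ∑ i, W i j = 1)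
    (hW_diag : ∀ i, η ≤ W i i)
    (hW_adj : ∀ i j, G.Adj i j → η ≤ W i j)
    (v : Fin L → ℝ) (hv : ∑ i, v i = 0) :
    ∑ i, (∑ j, W i j * v j) ^ 2
      ≤ (1 - η / (2 * (L:ℝ) ^ 2)) * ∑ i, (v i) ^ 2 := by
  haveI hne : Nonempty (Fin L) := hG.nonempty
  have hL : 0 < L := Fin.pos hne.some
  have hLr : (0:ℝ) < (L:ℝ) := by exact_mod_cast hL
  set S := ∑ i, (v i) ^ 2 with hS
  set m : Fin L → ℝ := fun i => ∑ j, W i j * v j with hm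
  set T : Fin L → ℝ := fun i => (∑ j, W i j * (v j) ^ 2) - (m i) ^ 2 with hT
  have hvar : ∀ i, T i = ∑ j, W i j * (v j - m i) ^ 2 := by
    intro i
    have expand : ∀ j, W i j * (v j - m i) ^ 2
        = W i j * (v j) ^ 2 - 2 * m i * (W i j * v j) + (m i) ^ 2 * W i j := by
      intro j; ring
    rw [Finset.sum_congr rfl (fun j _ => expand j)]
    rw [Finset.sum_add_distrib, Finset.sum_sub_distrib, ← Finset.mul_sum,
      ← Finset.mul_sum, hW_row]
    simp [hT, hm]
    ring
  have hT_nonneg : ∀ i, 0 ≤ T i := by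
    intro i
    rw [hvar]
    exact Finset.sum_nonneg fun j _ => mul_nonneg (hW_nonneg i j) (sq_nonneg _)
  have hT_edge : ∀ i j, G.Adj i j → η / 2 * (v i - v j) ^ 2 ≤ T i := by
    intro i j hadj
    rw [hvar]
    have hij : i ≠ j := hadj.ne
    have hpair : W i i * (v i - m i) ^ 2 + W i j * (v j - m i) ^ 2
        ≤ ∑ k, W i k * (v k - m i) ^ 2 := by
      have hps := Finset.sum_pair (f := fun k => W i k * (v k - m i) ^ 2) hij
      rw [← hps]
      exact Finset.sum_le_sum_of_subset_of_nonneg (Finset.subset_univ _)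
        (fun k _ _ => mul_nonneg (hW_nonneg i k) (sq_nonneg _))
    nlinarith [hW_diag i, hW_adj i j hadj, sq_nonneg (v i - m i),
      sq_nonneg (v j - m i), sq_nonneg (v i + v j - 2 * m i)]
  have hsum : ∑ i, (m i) ^ 2 = S - ∑ i, T i := by
    have h1 : ∑ i, ∑ j, W i j * (v j) ^ 2 = S := by
      rw [Finset.sum_comm]
      have : ∀ j, ∑ i, W i j * (v j) ^ 2 = (v j) ^ 2 := by
        intro j; rw [← Finset.sum_mul, hW_col, one_mul]
      rw [Finset.sum_congr rfl fun j _ => this j]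
    rw [Finset.sum_sub_distrib, h1]
    ring
  obtain ⟨k, -, hk⟩ := Finset.exists_le_of_sum_le (Finset.univ_nonempty (α := Fin L))
    (f := fun _ => S) (g := fun i => (L:ℝ) * (v i) ^ 2)
    (by rw [Finset.sum_const, ← Finset.mul_sum, Finset.card_univ, Fintype.card_fin,
          nsmul_eq_mul])
  obtain ⟨a, -, ha⟩ := Finset.exists_max_image Finset.univ v Finset.univ_nonempty
  obtain ⟨b, -, hb⟩ := Finset.exists_min_image Finset.univ v Finset.univ_nonempty
  have hva : 0 ≤ v a := by
    have h1 := Finset.sum_le_card_nsmul Finset.univ v (v a) (fun i _ => ha i (Finset.mem_univ i))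
    rw [hv, Finset.card_univ, Fintype.card_fin, nsmul_eq_mul] at h1
    nlinarith
  have hvb : v b ≤ 0 := by
    have h1 := Finset.card_nsmul_le_sum Finset.univ v (v b) (fun i _ => hb i (Finset.mem_univ i))
    rw [hv, Finset.card_univ, Fintype.card_fin, nsmul_eq_mul] at h1
    nlinarith
  have hSle : S ≤ (L:ℝ) * (v a - v b) ^ 2 := by
    have h1 := ha k (Finset.mem_univ k)
    have h2 := hb k (Finset.mem_univ k)
    have hk2 : (v k) ^ 2 ≤ (v a - v b) ^ 2 := by nlinarith
    nlinarith
  obtain ⟨w⟩ := hG.preconnected a b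
  set p := w.bypass with hp'
  have hpath : p.IsPath := w.bypass_isPath
  have hnd : p.support.Nodup := hpath.support_nodup
  have hlen : (p.length : ℝ) ≤ (L:ℝ) := by
    have := hpath.length_lt
    rw [Fintype.card_fin] at this
    exact_mod_cast this.le
  have hfst_nodup : (p.darts.map (fun d => d.fst)).Nodup := by
    rw [SimpleGraph.Walk.map_fst_darts]
    exact List.Nodup.sublist (List.dropLast_sublist _) hnd
  have hdsum : ((p.darts.map (fun d => d.fst)).map T).sum ≤ ∑ i, T i := by
    rw [← List.sum_toFinset _ hfst_nodup]
    exact Finset.sum_le_sum_of_subset_of_nonneg (Finset.subset_univ _)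
      (fun i _ _ => hT_nonneg i)
  have hTd : (p.darts.map (fun d => η / 2 * (v d.fst - v d.snd) ^ 2)).sum
      ≤ ((p.darts.map (fun d => d.fst)).map T).sum := by
    rw [List.map_map]
    exact List.sum_le_sum (fun d _ => hT_edge d.fst d.snd d.adj)
  have hCS : (v a - v b) ^ 2
      ≤ (p.length : ℝ) * (p.darts.map (fun d => (v d.fst - v d.snd) ^ 2)).sum := by
    have h1 := list_cs (p.darts.map (fun d => v d.fst - v d.snd))
    rw [walk_tele v p] at h1
    rw [List.map_map, List.length_map] at h1
    simpa [SimpleGraph.Walk.length_darts, Function.comp_def] using h1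
  have hDnn : 0 ≤ (p.darts.map (fun d => (v d.fst - v d.snd) ^ 2)).sum :=
    List.sum_nonneg (by
      intro y hy; simp only [List.mem_map] at hy
      obtain ⟨d, _, rfl⟩ := hy; positivity)
  have hfac : (p.darts.map (fun d => η / 2 * (v d.fst - v d.snd) ^ 2)).sum
      = η / 2 * (p.darts.map (fun d => (v d.fst - v d.snd) ^ 2)).sum := by
    rw [← List.sum_map_mul_left]
  have hTnn : 0 ≤ ∑ i, T i := Finset.sum_nonneg fun i _ => hT_nonneg i
  have hmain : η * S ≤ 2 * (L:ℝ) ^ 2 * ∑ i, T i := by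
    have c1 : η * S ≤ η * ((L:ℝ) * (v a - v b) ^ 2) :=
      mul_le_mul_of_nonneg_left hSle hη.le
    have c2 : η * ((L:ℝ) * (v a - v b) ^ 2)
        ≤ η * ((L:ℝ) * ((p.length : ℝ) * (p.darts.map (fun d => (v d.fst - v d.snd) ^ 2)).sum)) := by
      have := mul_le_mul_of_nonneg_left hCS (le_of_lt hLr)
      exact mul_le_mul_of_nonneg_left this hη.le
    have c4 : η * (p.darts.map (fun d => (v d.fst - v d.snd) ^ 2)).sum ≤ 2 * ∑ i, T i := by
      have := le_trans hTd hdsum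
      rw [hfac] at this
      linarith
    have c5 : ((L:ℝ) * (p.length : ℝ)) * (η * (p.darts.map (fun d => (v d.fst - v d.snd) ^ 2)).sum)
        ≤ ((L:ℝ) * (L:ℝ)) * (2 * ∑ i, T i) := by
      apply mul_le_mul
      · exact mul_le_mul_of_nonneg_left hlen (le_of_lt hLr)
      · exact c4
      · positivity
      · positivity
    calc η * S ≤ _ := c1
      _ ≤ _ := c2
      _ = ((L:ℝ) * (p.length : ℝ)) * (η * (p.darts.map (fun d => (v d.fst - v d.snd) ^ 2)).sum) := by
        ring
      _ ≤ ((L:ℝ) * (L:ℝ)) * (2 * ∑ i, T i) := c5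
      _ = 2 * (L:ℝ) ^ 2 * ∑ i, T i := by ring
  rw [hsum]
  have hL2 : (0:ℝ) < 2 * (L:ℝ) ^ 2 := by positivity
  have heq : (1 - η / (2 * (L:ℝ) ^ 2)) * S = S - η * S / (2 * (L:ℝ) ^ 2) := by ring
  rw [heq]
  have hfin : η * S / (2 * (L:ℝ) ^ 2) ≤ ∑ i, T i := by
    rw [div_le_iff₀ hL2]
    nlinarith [hmain, hTnn]
  linarith

set_option maxHeartbeats 1000000 in
/-- Frobenius-norm bound on the deviation of the perturbed consensus
iterates from the row average, for a doubly stochastic weight matrix adapted to a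
connected communication graph. -/
theorem perturbed_consensus_deviation_frobenius_bound
    (L n tq : ℕ) (G : SimpleGraph (Fin L)) (hG : G.Connected)
    (η : ℝ) (hη : 0 < η) (W : Matrix (Fin L) (Fin L) ℝ)
    (hW_nonneg : ∀ i j, 0 ≤ W i j)
    (hW_row : ∀ i, ∑ j, W i j = 1)
    (hW_col : ∀ j, ∑ i, W i j = 1)
    (hW_diag : ∀ i, η ≤ W i i)
    (hW_adj : ∀ i j, G.Adj i j → η ≤ W i j)
    (hW_zero : ∀ i j, i ≠ j → ¬ G.Adj i j → W i j = 0)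
    (cw : ℝ) (hcw : cw = 1 - η / (4 * (L : ℝ) ^ 2))
    (J : Matrix (Fin L) (Fin L) ℝ) (hJ : J = Matrix.of fun _ _ => (1 : ℝ))
    (e xbar : ℕ → Matrix (Fin L) (Fin n) ℝ)
    (hrec : ∀ t : ℕ, tq < t → xbar t = W * xbar (t - 1) + e t) :
    ∀ p : ℕ, 1 ≤ p →
      ‖xbar (tq + p) - ((1 / (L : ℝ)) • J) * xbar (tq + p)‖
        ≤ (L : ℝ) * cw ^ (p - 1) * ‖xbar tq‖
          + (L : ℝ) * ∑ τ ∈ Finset.Icc 1 (p - 1), cw ^ (τ - 1) * ‖e (tq + p - τ)‖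
          + Real.sqrt ((L : ℝ) - 1) * ‖e (tq + p)‖ := by
  haveI hne : Nonempty (Fin L) := hG.nonempty
  have hL : 0 < L := Fin.pos hne.some
  have hLr : (0:ℝ) < (L:ℝ) := by exact_mod_cast hL
  have hL1 : (1:ℝ) ≤ (L:ℝ) := by exact_mod_cast hL
  have hη1 : η ≤ 1 := by
    have h1 := hW_diag hne.some
    have h2 : W hne.some hne.some ≤ ∑ j, W hne.some j :=
      Finset.single_le_sum (fun j _ => hW_nonneg _ j) (Finset.mem_univ _)
    rw [hW_row] at h2; linarith
  have hcw0 : 0 ≤ cw := by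
    rw [hcw]
    have h4 : (1:ℝ) ≤ 4 * (L:ℝ) ^ 2 := by nlinarith
    have : η / (4 * (L:ℝ) ^ 2) ≤ 1 := by
      rw [div_le_one (by positivity)]; linarith
    linarith
  have hcw1 : cw ≤ 1 := by
    rw [hcw]
    have : 0 ≤ η / (4 * (L:ℝ) ^ 2) := by positivity
    linarith
  have hcwL : cw ≤ (L:ℝ) := le_trans hcw1 hL1
  -- Frobenius norm formula
  have hnorm : ∀ A : Matrix (Fin L) (Fin n) ℝ,
      ‖A‖ = Real.sqrt (∑ i, ∑ j, (A i j) ^ 2) := by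
    intro A
    rw [Matrix.frobenius_norm_def, Real.sqrt_eq_rpow]
    congr 1
    apply Finset.sum_congr rfl; intro i _
    apply Finset.sum_congr rfl; intro j _
    rw [Real.norm_eq_abs, Real.rpow_two, sq_abs]
  -- the projection matrix
  set Pm : Matrix (Fin L) (Fin L) ℝ := 1 - (1 / (L:ℝ)) • J with hPm
  have hJJ : J * J = (L:ℝ) • J := by
    ext i j
    simp [Matrix.mul_apply, hJ, Finset.card_univ]
  have hWJ : W * J = J := by
    ext i j
    simp [Matrix.mul_apply, hJ, hW_row]
  have hJW : J * W = J := by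
    ext i j
    simp [Matrix.mul_apply, hJ, hW_col]
  have hPmJ : Pm * J = 0 := by
    rw [hPm, Matrix.sub_mul, Matrix.one_mul, Matrix.smul_mul, hJJ, smul_smul,
      one_div, inv_mul_cancel₀ (ne_of_gt hLr), one_smul, sub_self]
  have hPmPm : Pm * Pm = Pm := by
    have h1 : Pm * Pm = Pm * 1 - Pm * ((1 / (L:ℝ)) • J) := by
      rw [← Matrix.mul_sub, ← hPm]
    rw [h1, Matrix.mul_one, Matrix.mul_smul, hPmJ, smul_zero, sub_zero]
  have hPmW : Pm * W = W * Pm := by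
    rw [hPm, Matrix.sub_mul, Matrix.mul_sub, Matrix.one_mul, Matrix.mul_one,
      Matrix.smul_mul, Matrix.mul_smul, hJW, hWJ]
  have hcomm : ∀ X : Matrix (Fin L) (Fin n) ℝ,
      Pm * (W * X) = (W * Pm) * (Pm * X) := by
    intro X
    calc Pm * (W * X) = (Pm * W) * X := (Matrix.mul_assoc _ _ _).symm
      _ = (W * Pm) * X := by rw [hPmW]
      _ = (W * (Pm * Pm)) * X := by rw [hPmPm]
      _ = ((W * Pm) * Pm) * X := by rw [← Matrix.mul_assoc W Pm Pm]
      _ = (W * Pm) * (Pm * X) := Matrix.mul_assoc _ _ _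
  have hPapp : ∀ (M : Matrix (Fin L) (Fin n) ℝ) i j,
      (Pm * M) i j = M i j - (1 / (L:ℝ)) * ∑ k, M k j := by
    intro M i j
    rw [hPm, Matrix.sub_mul, Matrix.sub_apply, Matrix.one_mul, Matrix.smul_mul,
      Matrix.smul_apply, Matrix.mul_apply]
    simp [hJ]
  have hPcol : ∀ (M : Matrix (Fin L) (Fin n) ℝ) j, ∑ i, (Pm * M) i j = 0 := by
    intro M j
    rw [Finset.sum_congr rfl fun i _ => hPapp M i j]
    rw [Finset.sum_sub_distrib, Finset.sum_const, Finset.card_univ, Fintype.card_fin,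
      nsmul_eq_mul]
    field_simp
    simp
  -- Pm contracts the Frobenius norm
  have hPM_fsq : ∀ M : Matrix (Fin L) (Fin n) ℝ,
      ∑ i, ∑ j, ((Pm * M) i j) ^ 2 ≤ ∑ i, ∑ j, (M i j) ^ 2 := by
    intro M
    rw [Finset.sum_comm, Finset.sum_comm (f := fun i j => (M i j) ^ 2)]
    apply Finset.sum_le_sum
    intro j _
    set s := ∑ k, M k j with hs
    set μ := (1 / (L:ℝ)) * s with hμ
    have expand : ∀ i, ((Pm * M) i j) ^ 2
        = (M i j) ^ 2 - 2 * μ * M i j + μ ^ 2 := by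
      intro i; rw [hPapp]; ring
    rw [Finset.sum_congr rfl fun i _ => expand i]
    rw [Finset.sum_add_distrib, Finset.sum_sub_distrib, ← Finset.mul_sum, ← hs,
      Finset.sum_const, Finset.card_univ, Fintype.card_fin, nsmul_eq_mul]
    have hkey : 2 * μ * s - (L:ℝ) * μ ^ 2 = s ^ 2 / (L:ℝ) := by
      rw [hμ]; field_simp; ring
    have : 0 ≤ s ^ 2 / (L:ℝ) := by positivity
    linarith
  have hPnorm : ∀ M : Matrix (Fin L) (Fin n) ℝ, ‖Pm * M‖ ≤ ‖M‖ := by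
    intro M
    rw [hnorm, hnorm]
    exact Real.sqrt_le_sqrt (hPM_fsq M)
  -- contraction on zero-column-sum matrices
  have hnWM : ∀ M : Matrix (Fin L) (Fin n) ℝ, (∀ j, ∑ i, M i j = 0) →
      ‖W * M‖ ≤ cw * ‖M‖ := by
    intro M hcol
    have hfsq : ∑ i, ∑ j, ((W * M) i j) ^ 2 ≤ cw ^ 2 * ∑ i, ∑ j, (M i j) ^ 2 := by
      rw [Finset.sum_comm, Finset.sum_comm (f := fun i j => (M i j) ^ 2),
        Finset.mul_sum]
      apply Finset.sum_le_sum
      intro j _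
      have h1 : ∑ i, ((W * M) i j) ^ 2 = ∑ i, (∑ k, W i k * M k j) ^ 2 := by
        apply Finset.sum_congr rfl; intro i _
        rw [Matrix.mul_apply]
      rw [h1]
      have h2 := key_vec L G hG η hη W hW_nonneg hW_row hW_col hW_diag hW_adj
        (fun k => M k j) (hcol j)
      have h3 : (1 - η / (2 * (L:ℝ) ^ 2)) ≤ cw ^ 2 := by
        have : cw ^ 2 - (1 - η / (2 * (L:ℝ) ^ 2)) = (η / (4 * (L:ℝ) ^ 2)) ^ 2 := by
          rw [hcw]; field_simp; ring
        nlinarith [sq_nonneg (η / (4 * (L:ℝ) ^ 2))]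
      have h4 : 0 ≤ ∑ i, (M i j) ^ 2 :=
        Finset.sum_nonneg fun i _ => sq_nonneg _
      calc ∑ i, (∑ k, W i k * M k j) ^ 2
          ≤ (1 - η / (2 * (L:ℝ) ^ 2)) * ∑ i, (M i j) ^ 2 := h2
        _ ≤ cw ^ 2 * ∑ i, (M i j) ^ 2 := mul_le_mul_of_nonneg_right h3 h4
    rw [hnorm, hnorm]
    calc Real.sqrt (∑ i, ∑ j, ((W * M) i j) ^ 2)
        ≤ Real.sqrt (cw ^ 2 * ∑ i, ∑ j, (M i j) ^ 2) := Real.sqrt_le_sqrt hfsq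
      _ = cw * Real.sqrt (∑ i, ∑ j, (M i j) ^ 2) := by
          rw [Real.sqrt_mul (sq_nonneg cw), Real.sqrt_sq hcw0]
  have hBnorm : ∀ M : Matrix (Fin L) (Fin n) ℝ, ‖(W * Pm) * M‖ ≤ cw * ‖M‖ := by
    intro M
    rw [Matrix.mul_assoc]
    calc ‖W * (Pm * M)‖ ≤ cw * ‖Pm * M‖ := hnWM _ (hPcol M)
      _ ≤ cw * ‖M‖ := mul_le_mul_of_nonneg_left (hPnorm M) hcw0
  have hPe : ∀ M : Matrix (Fin L) (Fin n) ℝ,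
      ‖Pm * M‖ ≤ Real.sqrt ((L:ℝ) - 1) * ‖M‖ := by
    intro M
    by_cases hL2 : 2 ≤ L
    · have h1 : (1:ℝ) ≤ (L:ℝ) - 1 := by
        have : (2:ℝ) ≤ (L:ℝ) := by exact_mod_cast hL2
        linarith
      have hs : 1 ≤ Real.sqrt ((L:ℝ) - 1) := Real.one_le_sqrt.2 h1
      calc ‖Pm * M‖ ≤ ‖M‖ := hPnorm M
        _ = 1 * ‖M‖ := (one_mul _).symm
        _ ≤ Real.sqrt ((L:ℝ) - 1) * ‖M‖ :=
            mul_le_mul_of_nonneg_right hs (norm_nonneg M)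
    · have hLe : L = 1 := by omega
      subst hLe
      have hzero : Pm * M = 0 := by
        ext i j
        rw [hPapp]
        have h0 : ∑ k, M k j = M i j := by
          rw [Fintype.sum_subsingleton _ i]
        rw [h0]
        norm_num
      rw [hzero]
      simp only [norm_zero]
      positivity
  -- main induction
  have hmain : ∀ k : ℕ, ‖Pm * xbar (tq + k)‖
      ≤ cw ^ k * ‖xbar tq‖ + ∑ s ∈ Finset.range k, cw ^ s * ‖Pm * e (tq + k - s)‖ := by
    intro k
    induction k with
    | zero => simpa using hPnorm (xbar tq)
    | succ k ih =>
      have hrec' : xbar (tq + (k + 1)) = W * xbar (tq + k) + e (tq + (k + 1)) := by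
        have h := hrec (tq + (k + 1)) (by omega)
        rw [show tq + (k + 1) - 1 = tq + k by omega] at h
        exact h
      have hstep : Pm * xbar (tq + (k + 1))
          = (W * Pm) * (Pm * xbar (tq + k)) + Pm * e (tq + (k + 1)) := by
        rw [hrec', Matrix.mul_add, hcomm]
      have hsum2 : ∑ s ∈ Finset.range (k + 1), cw ^ s * ‖Pm * e (tq + (k + 1) - s)‖
          = ∑ s ∈ Finset.range k, cw ^ (s + 1) * ‖Pm * e (tq + k - s)‖
            + ‖Pm * e (tq + (k + 1))‖ := by
        rw [Finset.sum_range_succ']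
        congr 1
        · apply Finset.sum_congr rfl; intro s _
          rw [show tq + (k + 1) - (s + 1) = tq + k - s by omega]
        · simp
      have hdist : cw * (cw ^ k * ‖xbar tq‖
            + ∑ s ∈ Finset.range k, cw ^ s * ‖Pm * e (tq + k - s)‖)
          = cw ^ (k + 1) * ‖xbar tq‖
            + ∑ s ∈ Finset.range k, cw ^ (s + 1) * ‖Pm * e (tq + k - s)‖ := by
        rw [mul_add, Finset.mul_sum]
        congr 1
        · ring
        · apply Finset.sum_congr rfl; intro s _; ring
      rw [hstep, hsum2]
      calc ‖(W * Pm) * (Pm * xbar (tq + k)) + Pm * e (tq + (k + 1))‖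
          ≤ ‖(W * Pm) * (Pm * xbar (tq + k))‖ + ‖Pm * e (tq + (k + 1))‖ :=
            norm_add_le _ _
        _ ≤ cw * ‖Pm * xbar (tq + k)‖ + ‖Pm * e (tq + (k + 1))‖ :=
            add_le_add_left (hBnorm _) _
        _ ≤ cw * (cw ^ k * ‖xbar tq‖
              + ∑ s ∈ Finset.range k, cw ^ s * ‖Pm * e (tq + k - s)‖)
            + ‖Pm * e (tq + (k + 1))‖ :=
            add_le_add_left (mul_le_mul_of_nonneg_left ih hcw0) _
        _ = cw ^ (k + 1) * ‖xbar tq‖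
            + (∑ s ∈ Finset.range k, cw ^ (s + 1) * ‖Pm * e (tq + k - s)‖
              + ‖Pm * e (tq + (k + 1))‖) := by rw [hdist]; ring
  -- final assembly
  intro p hp
  obtain ⟨q, rfl⟩ : ∃ q, p = q + 1 := ⟨p - 1, by omega⟩
  have hLHS : xbar (tq + (q + 1)) - ((1 / (L:ℝ)) • J) * xbar (tq + (q + 1))
      = Pm * xbar (tq + (q + 1)) := by
    rw [hPm, Matrix.sub_mul, Matrix.one_mul]
  rw [hLHS]
  refine le_trans (hmain (q + 1)) ?_
  simp only [Nat.add_sub_cancel]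
  have e1 : cw ^ (q + 1) * ‖xbar tq‖ ≤ (L:ℝ) * cw ^ q * ‖xbar tq‖ := by
    have h1 : cw ^ (q + 1) ≤ (L:ℝ) * cw ^ q := by
      rw [pow_succ]
      calc cw ^ q * cw ≤ cw ^ q * (L:ℝ) :=
            mul_le_mul_of_nonneg_left hcwL (pow_nonneg hcw0 q)
        _ = (L:ℝ) * cw ^ q := mul_comm _ _
    exact mul_le_mul_of_nonneg_right h1 (norm_nonneg _)
  have hIcc : ∑ τ ∈ Finset.Icc 1 q, cw ^ (τ - 1) * ‖e (tq + (q + 1) - τ)‖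
      = ∑ s ∈ Finset.range q, cw ^ s * ‖e (tq + (q + 1) - (s + 1))‖ := by
    rw [← Finset.Ico_add_one_right_eq_Icc, Finset.sum_Ico_eq_sum_range]
    apply Finset.sum_congr (by congr 1)
    intro s _
    rw [show 1 + s - 1 = s by omega, show tq + (q + 1) - (1 + s) = tq + (q + 1) - (s + 1) by omega]
  have e2 : ∑ s ∈ Finset.range q, cw ^ (s + 1) * ‖Pm * e (tq + (q + 1) - (s + 1))‖
      ≤ (L:ℝ) * ∑ τ ∈ Finset.Icc 1 q, cw ^ (τ - 1) * ‖e (tq + (q + 1) - τ)‖ := by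
    rw [hIcc, Finset.mul_sum]
    apply Finset.sum_le_sum
    intro s _
    have h1 : ‖Pm * e (tq + (q + 1) - (s + 1))‖ ≤ ‖e (tq + (q + 1) - (s + 1))‖ :=
      hPnorm _
    have h2 : cw ^ (s + 1) ≤ (L:ℝ) * cw ^ s := by
      rw [pow_succ]
      calc cw ^ s * cw ≤ cw ^ s * (L:ℝ) :=
            mul_le_mul_of_nonneg_left hcwL (pow_nonneg hcw0 s)
        _ = (L:ℝ) * cw ^ s := mul_comm _ _
    calc cw ^ (s + 1) * ‖Pm * e (tq + (q + 1) - (s + 1))‖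
        ≤ cw ^ (s + 1) * ‖e (tq + (q + 1) - (s + 1))‖ :=
          mul_le_mul_of_nonneg_left h1 (pow_nonneg hcw0 _)
      _ ≤ ((L:ℝ) * cw ^ s) * ‖e (tq + (q + 1) - (s + 1))‖ :=
          mul_le_mul_of_nonneg_right h2 (norm_nonneg _)
      _ = (L:ℝ) * (cw ^ s * ‖e (tq + (q + 1) - (s + 1))‖) := by ring
  have hsplit : ∑ s ∈ Finset.range (q + 1), cw ^ s * ‖Pm * e (tq + (q + 1) - s)‖
      = ∑ s ∈ Finset.range q, cw ^ (s + 1) * ‖Pm * e (tq + (q + 1) - (s + 1))‖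
        + ‖Pm * e (tq + (q + 1))‖ := by
    rw [Finset.sum_range_succ']
    simp
  rw [hsplit]
  have e3 : ‖Pm * e (tq + (q + 1))‖ ≤ Real.sqrt ((L:ℝ) - 1) * ‖e (tq + (q + 1))‖ :=
    hPe _
  linarith [e1, e2, e3]
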